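/- Energy estimate for classical solutions: let L : ℝ → ℝ be continuously differentiable with L' ≥ 0, let A, B ∈ C¹([0,T]), and let u be a classical solution of u_t = ∂ₓ(L(u_x)) on [0,1]×[0,T] with u(0,t) = A(t) and u(1,t) = B(t) for all t. Set g(x,t) = (B(t) − A(t))x + A(t) and v = u − g. Then for all t ∈ [0,T], ‖v(·,t)‖²_{L²(0,1)} ≤ (‖v(·,0)‖²_{L²(0,1)} + ∫₀ᵀ∫₀¹ (∂_t g(x,s))² dx ds) · e^T. -/

import Mathlib

open MeasureTheory Set Filter Topology

noncomputable section

/-- A classical solution of `u_t = ∂ₓ(L(u_x))` on `[0,1] × [0,T]`: `u` is continuous together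
with its partial derivatives `ut = u_t`, `ux = u_x`, `uxx = u_xx` up to the boundary and
satisfies `u_t = L'(u_x) · u_xx` everywhere in the closed rectangle. -/
structure IsClassicalSolution (T : ℝ) (L : ℝ → ℝ) (u ut ux uxx : ℝ → ℝ → ℝ) : Prop where
  cont_u : ContinuousOn (fun p : ℝ × ℝ => u p.1 p.2) (Icc (0:ℝ) 1 ×ˢ Icc (0:ℝ) T)
  cont_ut : ContinuousOn (fun p : ℝ × ℝ => ut p.1 p.2) (Icc (0:ℝ) 1 ×ˢ Icc (0:ℝ) T)
  cont_ux : ContinuousOn (fun p : ℝ × ℝ => ux p.1 p.2) (Icc (0:ℝ) 1 ×ˢ Icc (0:ℝ) T)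
  cont_uxx : ContinuousOn (fun p : ℝ × ℝ => uxx p.1 p.2) (Icc (0:ℝ) 1 ×ˢ Icc (0:ℝ) T)
  time_deriv : ∀ x ∈ Icc (0:ℝ) 1, ∀ t ∈ Icc (0:ℝ) T,
    HasDerivWithinAt (fun s => u x s) (ut x t) (Icc (0:ℝ) T) t
  space_deriv : ∀ x ∈ Icc (0:ℝ) 1, ∀ t ∈ Icc (0:ℝ) T,
    HasDerivWithinAt (fun y => u y t) (ux x t) (Icc (0:ℝ) 1) x
  space_deriv2 : ∀ x ∈ Icc (0:ℝ) 1, ∀ t ∈ Icc (0:ℝ) T,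
    HasDerivWithinAt (fun y => ux y t) (uxx x t) (Icc (0:ℝ) 1) x
  pde : ∀ x ∈ Icc (0:ℝ) 1, ∀ t ∈ Icc (0:ℝ) T,
    ut x t = deriv L (ux x t) * uxx x t

/-- Auxiliary: explicit value of `∫₀¹ (d x + e)² dx`. -/
lemma sq_int_aux (d e : ℝ) : (∫ x in (0:ℝ)..1, (d * x + e)^2) = d^2/3 + d*e + e^2 := by
  have h : ∀ x ∈ uIcc (0:ℝ) 1,
      HasDerivAt (fun y : ℝ => d^2 * y^3 / 3 + d*e * y^2 + e^2 * y) ((d * x + e)^2) x := by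
    intro x _
    have h1 := ((((hasDerivAt_pow 3 x).const_mul (d^2)).div_const 3).add
      ((hasDerivAt_pow 2 x).const_mul (d*e))).add ((hasDerivAt_id x).const_mul (e^2))
    refine h1.congr_deriv ?_
    push_cast
    ring
  have hint : IntervalIntegrable (fun x : ℝ => (d * x + e)^2) volume 0 1 :=
    (Continuous.intervalIntegrable (by continuity) 0 1)
  rw [intervalIntegral.integral_eq_sub_of_hasDerivAt h hint]
  norm_num

/-- energy estimate for classical solutions: for `L ∈ C¹` with `L' ≥ 0`,
`A, B ∈ C¹([0,T])` (with derivatives `A'`, `B'`), and `u` a classical solution of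
`u_t = ∂ₓ(L(u_x))` with `u(0,t) = A(t)`, `u(1,t) = B(t)`, setting
`g(x,t) = (B(t) − A(t)) x + A(t)` and `v = u − g`, one has for all `t ∈ [0,T]`:
`‖v(·,t)‖² ≤ (‖v(·,0)‖² + ∬ (∂ₜg)²) · e^T`. -/
theorem energy_estimate_classical
    (T : ℝ) (hT : 0 < T)
    (L : ℝ → ℝ) (hL : ContDiff ℝ 1 L) (hL' : ∀ p, 0 ≤ deriv L p)
    (A B A' B' : ℝ → ℝ)
    (hA : ∀ t ∈ Icc (0:ℝ) T, HasDerivWithinAt A (A' t) (Icc (0:ℝ) T) t)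
    (hB : ∀ t ∈ Icc (0:ℝ) T, HasDerivWithinAt B (B' t) (Icc (0:ℝ) T) t)
    (hA' : ContinuousOn A' (Icc (0:ℝ) T)) (hB' : ContinuousOn B' (Icc (0:ℝ) T))
    (u ut ux uxx : ℝ → ℝ → ℝ)
    (hsol : IsClassicalSolution T L u ut ux uxx)
    (hbc : ∀ t ∈ Icc (0:ℝ) T, u 0 t = A t ∧ u 1 t = B t) :
    ∀ t ∈ Icc (0:ℝ) T,
      ∫ x in (0:ℝ)..1, (u x t - ((B t - A t) * x + A t)) ^ 2 ≤
        ((∫ x in (0:ℝ)..1, (u x 0 - ((B 0 - A 0) * x + A 0)) ^ 2) +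
          ∫ s in (0:ℝ)..T, ∫ x in (0:ℝ)..1, ((B' s - A' s) * x + A' s) ^ 2) *
          Real.exp T := by
  have hT01 : (0:ℝ) ≤ T := hT.le
  set K : Set (ℝ × ℝ) := Icc (0:ℝ) 1 ×ˢ Icc (0:ℝ) T with hK_def
  have hIx : uIoc (0:ℝ) 1 ⊆ Icc (0:ℝ) 1 := by
    rw [uIoc_of_le zero_le_one]; exact Ioc_subset_Icc_self
  have hAc : ContinuousOn A (Icc (0:ℝ) T) := fun s hs => (hA s hs).continuousWithinAt
  have hBc : ContinuousOn B (Icc (0:ℝ) T) := fun s hs => (hB s hs).continuousWithinAt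
  have hLd : Differentiable ℝ L := hL.differentiable one_ne_zero
  have hLc : Continuous L := hLd.continuous
  have hLmono : Monotone L := monotone_of_deriv_nonneg hLd hL'
  have hLdc : Continuous (deriv L) := hL.continuous_deriv le_rfl
  set v : ℝ → ℝ → ℝ := fun x s => u x s - ((B s - A s) * x + A s) with hv_def
  set vt : ℝ → ℝ → ℝ := fun x s => ut x s - ((B' s - A' s) * x + A' s) with hvt_def
  set E : ℝ → ℝ := fun s => ∫ x in (0:ℝ)..1, v x s ^ 2 with hE_def
  set φ : ℝ → ℝ := fun s => ∫ x in (0:ℝ)..1, ((B' s - A' s) * x + A' s) ^ 2 with hφ_def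
  set Φ : ℝ → ℝ := fun r => ∫ s in (0:ℝ)..r, φ s with hΦ_def
  -- generic slice lemmas
  have sliceX : ∀ f : ℝ → ℝ → ℝ, ContinuousOn (fun p : ℝ × ℝ => f p.1 p.2) K →
      ∀ s ∈ Icc (0:ℝ) T, ContinuousOn (fun x => f x s) (Icc (0:ℝ) 1) := by
    intro f hf s hs
    exact hf.comp ((continuous_id.prodMk continuous_const).continuousOn)
      (fun x hx => ⟨hx, hs⟩)
  have sliceT : ∀ f : ℝ → ℝ → ℝ, ContinuousOn (fun p : ℝ × ℝ => f p.1 p.2) K →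
      ∀ x ∈ Icc (0:ℝ) 1, ContinuousOn (fun s => f x s) (Icc (0:ℝ) T) := by
    intro f hf x hx
    exact hf.comp ((continuous_const.prodMk continuous_id).continuousOn)
      (fun s hs => ⟨hx, hs⟩)
  have intgr : ∀ f : ℝ → ℝ, ContinuousOn f (Icc (0:ℝ) 1) → IntervalIntegrable f volume 0 1 :=
    fun f hf => ContinuousOn.intervalIntegrable (by rwa [uIcc_of_le zero_le_one])
  have meas1 : ∀ f : ℝ → ℝ, ContinuousOn f (Icc (0:ℝ) 1) →
      AEStronglyMeasurable f (volume.restrict (uIoc (0:ℝ) 1)) :=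
    fun f hf => (hf.mono hIx).aestronglyMeasurable measurableSet_uIoc
  have hsnd : ∀ {g : ℝ → ℝ}, ContinuousOn g (Icc (0:ℝ) T) →
      ContinuousOn (fun p : ℝ × ℝ => g p.2) K :=
    fun {g} hg => hg.comp continuous_snd.continuousOn (fun p hp => hp.2)
  have hgc : ContinuousOn (fun p : ℝ × ℝ => (B p.2 - A p.2) * p.1 + A p.2) K :=
    (((hsnd hBc).sub (hsnd hAc)).mul continuous_fst.continuousOn).add (hsnd hAc)
  have hgtc : ContinuousOn (fun p : ℝ × ℝ => (B' p.2 - A' p.2) * p.1 + A' p.2) K :=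
    (((hsnd hB').sub (hsnd hA')).mul continuous_fst.continuousOn).add (hsnd hA')
  have hvc : ContinuousOn (fun p : ℝ × ℝ => v p.1 p.2) K := hsol.cont_u.sub hgc
  have hvtc : ContinuousOn (fun p : ℝ × ℝ => vt p.1 p.2) K := hsol.cont_ut.sub hgtc
  have hKcomp : IsCompact K := isCompact_Icc.prod isCompact_Icc
  obtain ⟨C1, hC1⟩ := hKcomp.exists_bound_of_continuousOn (hvc.pow 2)
  obtain ⟨C2, hC2⟩ := hKcomp.exists_bound_of_continuousOn
    (show ContinuousOn (fun p : ℝ × ℝ => 2 * v p.1 p.2 * vt p.1 p.2) K from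
      (continuousOn_const.mul hvc).mul hvtc)
  -- boundary values of v
  have hval0 : ∀ s ∈ Icc (0:ℝ) T, v 0 s = 0 := by
    intro s hs; simp only [hv_def]; rw [(hbc s hs).1]; ring
  have hval1 : ∀ s ∈ Icc (0:ℝ) T, v 1 s = 0 := by
    intro s hs; simp only [hv_def]; rw [(hbc s hs).2]; ring
  -- continuity of E
  have hEc : ContinuousOn E (Icc (0:ℝ) T) := by
    intro s hs
    rw [hE_def]
    apply intervalIntegral.continuousWithinAt_of_dominated_interval (bound := fun _ => C1)
    · filter_upwards [self_mem_nhdsWithin] with r hr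
      exact meas1 _ ((sliceX _ hvc r hr).pow 2)
    · filter_upwards [self_mem_nhdsWithin] with r hr
      refine ae_of_all _ (fun x hx => ?_)
      simpa using hC1 (x, r) ⟨hIx hx, hr⟩
    · exact intervalIntegrable_const
    · refine ae_of_all _ (fun x hx => ?_)
      exact ((sliceT _ hvc x (hIx hx)).pow 2) s hs
  -- time derivative of v at interior times
  have hvt_deriv : ∀ x ∈ Icc (0:ℝ) 1, ∀ s ∈ Ioo (0:ℝ) T,
      HasDerivAt (fun r => v x r) (vt x s) s := by
    intro x hx s hs
    have hmem : Icc (0:ℝ) T ∈ 𝓝 s := Icc_mem_nhds hs.1 hs.2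
    have hu := (hsol.time_deriv x hx s (Ioo_subset_Icc_self hs)).hasDerivAt hmem
    have hA2 := (hA s (Ioo_subset_Icc_self hs)).hasDerivAt hmem
    have hB2 := (hB s (Ioo_subset_Icc_self hs)).hasDerivAt hmem
    have hg : HasDerivAt (fun r => (B r - A r) * x + A r) ((B' s - A' s) * x + A' s) s :=
      ((hB2.sub hA2).mul_const x).add hA2
    exact hu.sub hg
  -- derivative of E at interior times
  have hEd : ∀ s ∈ Ioo (0:ℝ) T,
      HasDerivAt E (∫ x in (0:ℝ)..1, 2 * v x s * vt x s) s := by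
    intro s hs
    rw [hE_def]
    set ε := min s (T - s) with hε_def
    have hεpos : 0 < ε := lt_min hs.1 (sub_pos.2 hs.2)
    have hball : Metric.ball s ε ⊆ Ioo (0:ℝ) T := by
      intro r hr
      rw [Metric.mem_ball, Real.dist_eq] at hr
      have h1 := abs_lt.1 hr
      have h2 : ε ≤ s := min_le_left _ _
      have h3 : ε ≤ T - s := min_le_right _ _
      constructor <;> linarith [h1.1, h1.2]
    refine (intervalIntegral.hasDerivAt_integral_of_dominated_loc_of_deriv_le
      (F := fun r x => v x r ^ 2) (F' := fun r x => 2 * v x r * vt x r)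
      (bound := fun _ => C2) (Metric.ball_mem_nhds s hεpos) ?_ ?_ ?_ ?_ ?_ ?_).2
    · filter_upwards [Icc_mem_nhds hs.1 hs.2] with r hr
      exact meas1 _ ((sliceX _ hvc r hr).pow 2)
    · exact intgr _ ((sliceX _ hvc s (Ioo_subset_Icc_self hs)).pow 2)
    · exact meas1 _
        (show ContinuousOn (fun x => 2 * v x s * vt x s) (Icc (0:ℝ) 1) from
          (continuousOn_const.mul (sliceX _ hvc s (Ioo_subset_Icc_self hs))).mul
            (sliceX _ hvtc s (Ioo_subset_Icc_self hs)))
    · refine ae_of_all _ (fun x hx r hr => ?_)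
      simpa using hC2 (x, r) ⟨hIx hx, Ioo_subset_Icc_self (hball hr)⟩
    · exact intervalIntegrable_const
    · refine ae_of_all _ (fun x hx r hr => ?_)
      have h := (hvt_deriv x (hIx hx) r (hball hr)).pow 2
      exact h.congr_deriv (by simp)
  -- integration by parts: sign of ∫ v ut
  have hIBP : ∀ s ∈ Icc (0:ℝ) T, (∫ x in (0:ℝ)..1, v x s * ut x s) ≤ 0 := by
    intro s hs
    have hvx : ∀ x ∈ Ioo (0:ℝ) 1, HasDerivAt (fun y => v y s) (ux x s - (B s - A s)) x := by
      intro x hx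
      have hmem : Icc (0:ℝ) 1 ∈ 𝓝 x := Icc_mem_nhds hx.1 hx.2
      have h1 := (hsol.space_deriv x (Ioo_subset_Icc_self hx) s hs).hasDerivAt hmem
      have h2 : HasDerivAt (fun y : ℝ => (B s - A s) * y + A s) (B s - A s) x := by
        simpa using (((hasDerivAt_id x).const_mul (B s - A s)).add_const (A s))
      exact h1.sub h2
    have hLux : ∀ x ∈ Ioo (0:ℝ) 1,
        HasDerivAt (fun y => L (ux y s)) (deriv L (ux x s) * uxx x s) x := by
      intro x hx
      have hmem : Icc (0:ℝ) 1 ∈ 𝓝 x := Icc_mem_nhds hx.1 hx.2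
      have h2 := (hsol.space_deriv2 x (Ioo_subset_Icc_self hx) s hs).hasDerivAt hmem
      exact (hLd (ux x s)).hasDerivAt.comp x h2
    have hH : ∀ x ∈ Ioo (0:ℝ) 1,
        HasDerivAt (fun y => v y s * (L (ux y s) - L (B s - A s)))
          ((ux x s - (B s - A s)) * (L (ux x s) - L (B s - A s)) +
            v x s * (deriv L (ux x s) * uxx x s)) x := by
      intro x hx
      exact (hvx x hx).mul ((hLux x hx).sub_const (L (B s - A s)))
    have hvsc := sliceX _ hvc s hs
    have huxsc := sliceX _ hsol.cont_ux s hs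
    have huxxsc := sliceX _ hsol.cont_uxx s hs
    have hutsc := sliceX _ hsol.cont_ut s hs
    have hHcont : ContinuousOn (fun x => v x s * (L (ux x s) - L (B s - A s)))
        (Icc (0:ℝ) 1) :=
      hvsc.mul ((hLc.comp_continuousOn huxsc).sub continuousOn_const)
    have hcont1 : ContinuousOn
        (fun x => (ux x s - (B s - A s)) * (L (ux x s) - L (B s - A s))) (Icc (0:ℝ) 1) :=
      (huxsc.sub continuousOn_const).mul ((hLc.comp_continuousOn huxsc).sub continuousOn_const)
    have hcont2 : ContinuousOn (fun x => v x s * (deriv L (ux x s) * uxx x s)) (Icc (0:ℝ) 1) :=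
      hvsc.mul ((hLdc.comp_continuousOn huxsc).mul huxxsc)
    have hint1 := intgr _ hcont1
    have hint2 := intgr _ hcont2
    have hFTC := intervalIntegral.integral_eq_sub_of_hasDeriv_right_of_le zero_le_one hHcont
      (fun x hx => (hH x hx).hasDerivWithinAt) (hint1.add hint2)
    rw [intervalIntegral.integral_add hint1 hint2] at hFTC
    have hbv : v 1 s * (L (ux 1 s) - L (B s - A s)) - v 0 s * (L (ux 0 s) - L (B s - A s)) = 0 := by
      rw [hval0 s hs, hval1 s hs]; ring
    rw [hbv] at hFTC
    have hpos : 0 ≤ ∫ x in (0:ℝ)..1,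
        (ux x s - (B s - A s)) * (L (ux x s) - L (B s - A s)) := by
      apply intervalIntegral.integral_nonneg zero_le_one
      intro x _
      rcases le_total (ux x s) (B s - A s) with h | h
      · have h2 := hLmono h; nlinarith
      · have h2 := hLmono h; nlinarith
    have hcongr : (∫ x in (0:ℝ)..1, v x s * ut x s)
        = ∫ x in (0:ℝ)..1, v x s * (deriv L (ux x s) * uxx x s) := by
      apply intervalIntegral.integral_congr
      intro x hx
      rw [uIcc_of_le zero_le_one] at hx
      show v x s * ut x s = v x s * (deriv L (ux x s) * uxx x s)
      rw [hsol.pde x hx s hs]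
    rw [hcongr]
    linarith
  -- nonnegativity of φ
  have hφnn : ∀ r, 0 ≤ φ r := by
    intro r
    rw [hφ_def]
    exact intervalIntegral.integral_nonneg zero_le_one (fun x _ => sq_nonneg _)
  have hE0nn : 0 ≤ E 0 := by
    rw [hE_def]
    exact intervalIntegral.integral_nonneg zero_le_one (fun x _ => sq_nonneg _)
  -- differential inequality
  have hEd_le : ∀ s ∈ Ioo (0:ℝ) T,
      (∫ x in (0:ℝ)..1, 2 * v x s * vt x s) ≤ E s + φ s := by
    intro s hs
    have hsIcc := Ioo_subset_Icc_self hs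
    have hvsc := sliceX _ hvc s hsIcc
    have hvtsc := sliceX _ hvtc s hsIcc
    have hutsc := sliceX _ hsol.cont_ut s hsIcc
    have hgtsc : ContinuousOn (fun x => (B' s - A' s) * x + A' s) (Icc (0:ℝ) 1) :=
      ((continuous_const.mul continuous_id).add continuous_const).continuousOn
    have hintL : IntervalIntegrable (fun x => 2 * v x s * vt x s) volume 0 1 :=
      intgr _ ((continuousOn_const.mul hvsc).mul hvtsc)
    have hint_vut : IntervalIntegrable (fun x => 2 * (v x s * ut x s)) volume 0 1 :=
      intgr _ (continuousOn_const.mul (hvsc.mul hutsc))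
    have hint_v2 : IntervalIntegrable (fun x => v x s ^ 2) volume 0 1 := intgr _ (hvsc.pow 2)
    have hint_g2 : IntervalIntegrable (fun x => ((B' s - A' s) * x + A' s) ^ 2) volume 0 1 :=
      intgr _ (hgtsc.pow 2)
    have hintR : IntervalIntegrable
        (fun x => 2 * (v x s * ut x s) + (v x s ^ 2 + ((B' s - A' s) * x + A' s) ^ 2))
        volume 0 1 := hint_vut.add (hint_v2.add hint_g2)
    have hmono : (∫ x in (0:ℝ)..1, 2 * v x s * vt x s) ≤
        ∫ x in (0:ℝ)..1,
          (2 * (v x s * ut x s) + (v x s ^ 2 + ((B' s - A' s) * x + A' s) ^ 2)) := by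
      apply intervalIntegral.integral_mono_on zero_le_one hintL hintR
      intro x _
      have hvt_eq : vt x s = ut x s - ((B' s - A' s) * x + A' s) := by rw [hvt_def]
      rw [hvt_eq]
      nlinarith [sq_nonneg (v x s + ((B' s - A' s) * x + A' s))]
    have hsplit : (∫ x in (0:ℝ)..1,
          (2 * (v x s * ut x s) + (v x s ^ 2 + ((B' s - A' s) * x + A' s) ^ 2)))
        = (∫ x in (0:ℝ)..1, 2 * (v x s * ut x s)) + (E s + φ s) := by
      rw [hE_def, hφ_def]
      rw [intervalIntegral.integral_add hint_vut (hint_v2.add hint_g2),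
        intervalIntegral.integral_add hint_v2 hint_g2]
    have h2vut : (∫ x in (0:ℝ)..1, 2 * (v x s * ut x s))
        = 2 * ∫ x in (0:ℝ)..1, v x s * ut x s := by
      rw [intervalIntegral.integral_const_mul]
    have := hIBP s hsIcc
    rw [hsplit, h2vut] at hmono
    linarith
  -- φ is continuous on [0,T]
  have hφeq : ∀ r, φ r = (B' r - A' r)^2/3 + (B' r - A' r) * A' r + (A' r)^2 := by
    intro r; rw [hφ_def]; exact sq_int_aux _ _
  have hφc : ContinuousOn φ (Icc (0:ℝ) T) := by
    have hc : ContinuousOn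
        (fun r => (B' r - A' r)^2/3 + (B' r - A' r) * A' r + (A' r)^2) (Icc (0:ℝ) T) :=
      ((((hB'.sub hA').pow 2).div_const 3).add ((hB'.sub hA').mul hA')).add (hA'.pow 2)
    exact hc.congr (fun r _ => hφeq r)
  have hφint : IntervalIntegrable φ volume 0 T :=
    ContinuousOn.intervalIntegrable (by rwa [uIcc_of_le hT01])
  have hΦc : ContinuousOn Φ (Icc (0:ℝ) T) := by
    rw [hΦ_def]
    have h := intervalIntegral.continuousOn_primitive_interval
      ((intervalIntegrable_iff' (f := φ) (μ := volume) (a := 0) (b := T)).1 hφint)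
    rwa [uIcc_of_le hT01] at h
  have hΦd : ∀ s ∈ Ioo (0:ℝ) T, HasDerivAt Φ (φ s) s := by
    intro s hs
    have h1 : IntervalIntegrable φ volume 0 s := hφint.mono_set (by
      rw [uIcc_of_le hT01, uIcc_of_le hs.1.le]
      exact Icc_subset_Icc le_rfl hs.2.le)
    have h2 : StronglyMeasurableAtFilter φ (𝓝 s) :=
      ContinuousOn.stronglyMeasurableAtFilter isOpen_Ioo (hφc.mono Ioo_subset_Icc_self) s hs
    have h3 : ContinuousAt φ s :=
      (hφc s (Ioo_subset_Icc_self hs)).continuousAt (Icc_mem_nhds hs.1 hs.2)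
    rw [hΦ_def]
    exact intervalIntegral.integral_hasDerivAt_right h1 h2 h3
  -- the Gronwall function
  set G : ℝ → ℝ := fun r => Real.exp (-r) * E r - Φ r with hG_def
  have hGc : ContinuousOn G (Icc (0:ℝ) T) := by
    rw [hG_def]
    exact (((Real.continuous_exp.comp continuous_neg).continuousOn).mul hEc).sub hΦc
  have hGd : ∀ s ∈ Ioo (0:ℝ) T, HasDerivAt G
      (-Real.exp (-s) * E s + Real.exp (-s) * (∫ x in (0:ℝ)..1, 2 * v x s * vt x s) - φ s) s := by
    intro s hs
    have he : HasDerivAt (fun r : ℝ => Real.exp (-r)) (-Real.exp (-s)) s := by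
      have := (Real.hasDerivAt_exp (-s)).comp s (hasDerivAt_neg s)
      simpa [mul_comm, Function.comp_def] using this
    have h := (he.mul (hEd s hs)).sub (hΦd s hs)
    rw [hG_def]
    exact h
  have hGanti : AntitoneOn G (Icc (0:ℝ) T) := by
    apply antitoneOn_of_deriv_nonpos (convex_Icc 0 T) hGc
    · intro r hr; rw [interior_Icc] at hr
      exact (hGd r hr).differentiableAt.differentiableWithinAt
    · intro r hr; rw [interior_Icc] at hr
      rw [(hGd r hr).deriv]
      have h1 := hEd_le r hr
      have h2 : Real.exp (-r) ≤ 1 := by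
        calc Real.exp (-r) ≤ Real.exp 0 := Real.exp_le_exp.2 (by linarith [hr.1])
          _ = 1 := Real.exp_zero
      have h3 : (0:ℝ) < Real.exp (-r) := Real.exp_pos _
      have h4 := hφnn r
      nlinarith [mul_le_mul_of_nonneg_left h1 h3.le]
  -- conclusion
  intro t ht
  have hG0 : G 0 = E 0 := by
    rw [hG_def, hΦ_def]
    simp
  have hmain := hGanti (left_mem_Icc.2 hT01) ht ht.1
  rw [hG0, hG_def] at hmain
  simp only at hmain
  have hEt : E t ≤ Real.exp t * (E 0 + Φ t) := by
    have h5 : Real.exp (-t) * E t ≤ E 0 + Φ t := by linarith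
    have h4 := mul_le_mul_of_nonneg_left h5 (Real.exp_pos t).le
    rwa [← mul_assoc, ← Real.exp_add, add_neg_cancel, Real.exp_zero, one_mul] at h4
  have hΦle : Φ t ≤ Φ T := by
    rw [hΦ_def]
    exact intervalIntegral.integral_mono_interval le_rfl ht.1 ht.2
      (Eventually.of_forall (fun r => hφnn r)) hφint
  have hΦtnn : 0 ≤ Φ t := by
    rw [hΦ_def]
    exact intervalIntegral.integral_nonneg ht.1 (fun r _ => hφnn r)
  have hfinal : E t ≤ (E 0 + Φ T) * Real.exp T := by
    calc E t ≤ Real.exp t * (E 0 + Φ t) := hEt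
      _ ≤ Real.exp T * (E 0 + Φ T) :=
        mul_le_mul (Real.exp_le_exp.2 ht.2) (by linarith) (by linarith) (Real.exp_pos T).le
      _ = (E 0 + Φ T) * Real.exp T := mul_comm _ _
  simpa only [hE_def, hv_def, hΦ_def, hφ_def] using hfinal
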